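/- arXiv:2507.16871 — 2 statements merged into one kernel-verified Lean document; each statement's English description precedes it below -/
import Mathlib

section
/- Let n be a natural number, a ∈ ℝ, A ∈ ℝⁿ, and let h : ℝ × ℝⁿ → ℝ be a differentiable function such that for all (y₀, y) ∈ ℝ × ℝⁿ: ∂h/∂y₀ (y₀,y) = a + Σᵢ Aᵢ·yᵢ − h(y₀,y), and ∂h/∂yᵢ (y₀,y) = Aᵢ for each 1 ≤ i ≤ n. Then there exists a constant C ∈ ℝ such that h(y₀, y) = C·e^{−y₀} + a + Σᵢ Aᵢ·yᵢ for all (y₀, y). -/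
theorem rank_one_maurer_cartan_pde_solution
    (n : ℕ) (a : ℝ) (A : Fin n → ℝ)
    (h : ℝ × (Fin n → ℝ) → ℝ)
    (hdiff : Differentiable ℝ h)
    (hd0 : ∀ p : ℝ × (Fin n → ℝ),
      fderiv ℝ h p (1, 0) = a + (∑ i, A i * p.2 i) - h p)
    (hdi : ∀ p : ℝ × (Fin n → ℝ), ∀ i : Fin n,
      fderiv ℝ h p (0, Pi.single i 1) = A i) :
    ∃ C : ℝ, ∀ p : ℝ × (Fin n → ℝ),
      h p = C * Real.exp (-p.1) + a + ∑ i, A i * p.2 i := by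
  refine ⟨h (0, (0 : Fin n → ℝ)) - a, ?_⟩
  -- Step 1: for each fixed y, solve the ODE in the first variable.
  have key1 : ∀ (y : Fin n → ℝ) (t : ℝ),
      h (t, y) = (h (0, y) - a - ∑ i, A i * y i) * Real.exp (-t)
        + a + ∑ i, A i * y i := by
    intro y t
    set S := ∑ i, A i * y i with hS
    have hderiv : ∀ s : ℝ, HasDerivAt (fun s : ℝ => h (s, y)) (a + S - h (s, y)) s := by
      intro s
      have h1 : HasDerivAt (fun s : ℝ => ((s, y) : ℝ × (Fin n → ℝ)))
          ((1 : ℝ), (0 : Fin n → ℝ)) s :=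
        (hasDerivAt_id s).prodMk (hasDerivAt_const s y)
      have h2 := (hdiff (s, y)).hasFDerivAt.comp_hasDerivAt s h1
      rw [hd0 (s, y)] at h2
      exact h2
    have hF : ∀ s : ℝ, HasDerivAt
        (fun s : ℝ => (h (s, y) - (a + S)) * Real.exp s) 0 s := by
      intro s
      have h1 : HasDerivAt (fun s : ℝ => h (s, y) - (a + S)) (a + S - h (s, y)) s :=
        (hderiv s).sub_const _
      have h2 := h1.mul (Real.hasDerivAt_exp s)
      refine h2.congr_deriv ?_
      ring
    have hconst : (h (t, y) - (a + S)) * Real.exp t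
        = (h (0, y) - (a + S)) * Real.exp 0 :=
      is_const_of_deriv_eq_zero (fun s => (hF s).differentiableAt)
        (fun s => (hF s).deriv) t 0
    have hexp : Real.exp t ≠ 0 := Real.exp_ne_zero t
    rw [Real.exp_zero, mul_one] at hconst
    rw [Real.exp_neg]
    field_simp
    nlinarith [hconst]
  -- Step 2: y ↦ h (0, y) - ∑ A i * y i is constant.
  have key2 : ∀ y : Fin n → ℝ,
      h (0, y) - ∑ i, A i * y i = h (0, (0 : Fin n → ℝ)) := by
    intro y
    set ℓ : (Fin n → ℝ) →L[ℝ] ℝ :=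
      ∑ i, A i • ContinuousLinearMap.proj i with hℓ
    have hℓapp : ∀ v : Fin n → ℝ, ℓ v = ∑ i, A i * v i := by
      intro v
      simp [hℓ, ContinuousLinearMap.sum_apply]
    have hg : ∀ y : Fin n → ℝ, HasFDerivAt (fun y : Fin n → ℝ => h (0, y))
        ((fderiv ℝ h (0, y)).comp (ContinuousLinearMap.inr ℝ ℝ (Fin n → ℝ))) y := by
      intro y
      exact (hdiff (0, y)).hasFDerivAt.comp y
        (ContinuousLinearMap.inr ℝ ℝ (Fin n → ℝ)).hasFDerivAt
    have hφ : ∀ y : Fin n → ℝ, HasFDerivAt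
        (fun y : Fin n → ℝ => h (0, y) - ∑ i, A i * y i)
        (((fderiv ℝ h (0, y)).comp (ContinuousLinearMap.inr ℝ ℝ (Fin n → ℝ))) - ℓ) y := by
      intro y
      have h2 : HasFDerivAt (fun y : Fin n → ℝ => ∑ i, A i * y i) ℓ y := by
        have := ℓ.hasFDerivAt (x := y)
        convert this using 1
        funext v
        rw [hℓapp v]
      exact (hg y).sub h2
    have hφ0 : ∀ y : Fin n → ℝ,
        fderiv ℝ (fun y : Fin n → ℝ => h (0, y) - ∑ i, A i * y i) y = 0 := by
      intro y
      rw [(hφ y).fderiv]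
      ext v
      have hv : v = ∑ i, v i • (Pi.single i 1 : Fin n → ℝ) := by
        funext j
        simp [Pi.single_apply, Finset.sum_apply]
      rw [ContinuousLinearMap.sub_apply]
      conv_lhs => rw [hv]
      rw [map_sum, map_sum]
      have : ∀ i : Fin n,
          ((fderiv ℝ h (0, y)).comp (ContinuousLinearMap.inr ℝ ℝ (Fin n → ℝ)))
            (v i • (Pi.single i 1 : Fin n → ℝ))
          - ℓ (v i • (Pi.single i 1 : Fin n → ℝ)) = 0 := by
        intro i
        rw [map_smul, map_smul]
        have e1 : ((fderiv ℝ h (0, y)).comp (ContinuousLinearMap.inr ℝ ℝ (Fin n → ℝ)))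
            ((Pi.single i 1 : Fin n → ℝ)) = A i := by
          simpa using hdi (0, y) i
        have e2 : ℓ ((Pi.single i 1 : Fin n → ℝ)) = A i := by
          rw [hℓapp]
          simp [Pi.single_apply]
        rw [e1, e2]
        ring
      rw [← Finset.sum_sub_distrib]
      simp only [ContinuousLinearMap.zero_apply]
      exact Finset.sum_eq_zero fun i _ => this i
    have hφdiff : Differentiable ℝ (fun y : Fin n → ℝ => h (0, y) - ∑ i, A i * y i) :=
      fun y => (hφ y).differentiableAt
    have := is_const_of_fderiv_eq_zero hφdiff hφ0 y 0
    simpa using this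
  intro p
  have h1 := key1 p.2 p.1
  have h2 := key2 p.2
  have hp : h p = h (p.1, p.2) := by simp
  rw [hp, h1]
  have : h (0, p.2) - a - ∑ i, A i * p.2 i = h (0, (0 : Fin n → ℝ)) - a := by
    linarith [h2]
  rw [this]
end

section
/- Let E₍ᵢ,ⱼ₎ denote matrix units of the 4×4 real matrices (indices 0,1,2,3). Define t₁ = E₍₀,₀₎ − E₍₃,₃₎, t₂ = (E₍₀,₁₎ − E₍₁,₃₎)/√2, t₃ = (E₍₀,₂₎ − E₍₂,₃₎)/√2, and define T₁ = −E₍₀,₀₎ + E₍₁,₁₎, T₂ = −E₍₀,₀₎ + E₍₂,₂₎, T₃ = −E₍₀,₀₎ + E₍₃,₃₎, T₄ = E₍₀,₁₎, T₅ = E₍₁,₂₎, T₆ = E₍₂,₃₎, T₇ = E₍₀,₂₎, T₈ = E₍₁,₃₎, T₉ = E₍₀,₃₎. The matrices T₁,…,T₉ are linearly independent and span the space B of upper-triangular traceless real 4×4 matrices, which is closed under the bracket [X,Y] = XY − YX. For any α₁, α₂, α₃, α₄ ∈ ℝ, let φ : B → M₄(ℝ) be the unique linear map with φ(T₁) = −2t₁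 + α₁t₂ + α₃t₃, φ(T₂) = φ(T₃) = −t₁ + (α₁/2)t₂ + (α₃/2)t₃, φ(T₄) = α₂t₂ + α₄t₃, and φ(T₅) = φ(T₆) = φ(T₇) = φ(T₈) = φ(T₉) = 0. Then φ([X,Y]) = [φ(X), φ(Y)] for all X, Y ∈ B. -/
open Matrix

/-- Matrix units of the `4 × 4` real matrices. -/
def E4 (i j : Fin 4) : Matrix (Fin 4) (Fin 4) ℝ := Matrix.single i j 1

/-- Generators of the solvable Lie algebra of `SO(1,3)/SO(3)`. -/
noncomputable def tGen : Fin 3 → Matrix (Fin 4) (Fin 4) ℝ :=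
  ![E4 0 0 - E4 3 3,
    (1 / Real.sqrt 2) • (E4 0 1 - E4 1 3),
    (1 / Real.sqrt 2) • (E4 0 2 - E4 2 3)]

/-- The paper's basis `T₁, …, T₉` of the Borel subalgebra of `sl(4, ℝ)`. -/
def TGen : Fin 9 → Matrix (Fin 4) (Fin 4) ℝ :=
  ![-E4 0 0 + E4 1 1,
    -E4 0 0 + E4 2 2,
    -E4 0 0 + E4 3 3,
    E4 0 1, E4 1 2, E4 2 3, E4 0 2, E4 1 3, E4 0 3]

/-- The set of upper-triangular traceless real `4 × 4` matrices (the Borel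
subalgebra of `sl(4, ℝ)`). -/
def borelSet : Set (Matrix (Fin 4) (Fin 4) ℝ) :=
  {X | X.BlockTriangular id ∧ X.trace = 0}

set_option maxHeartbeats 1600000

lemma hT0 : TGen 0 = !![-1,0,0,0; 0,1,0,0; 0,0,0,0; 0,0,0,0] := by
  show -E4 0 0 + E4 1 1 = _
  ext i j
  fin_cases i <;> fin_cases j <;>
    simp (config := { decide := true }) [E4, Matrix.single, Matrix.vecHead, Matrix.vecTail]
lemma hT1 : TGen 1 = !![-1,0,0,0; 0,0,0,0; 0,0,1,0; 0,0,0,0] := by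
  show -E4 0 0 + E4 2 2 = _
  ext i j
  fin_cases i <;> fin_cases j <;>
    simp (config := { decide := true }) [E4, Matrix.single, Matrix.vecHead, Matrix.vecTail]
lemma hT2 : TGen 2 = !![-1,0,0,0; 0,0,0,0; 0,0,0,0; 0,0,0,1] := by
  show -E4 0 0 + E4 3 3 = _
  ext i j
  fin_cases i <;> fin_cases j <;>
    simp (config := { decide := true }) [E4, Matrix.single, Matrix.vecHead, Matrix.vecTail]
lemma hT3 : TGen 3 = !![0,1,0,0; 0,0,0,0; 0,0,0,0; 0,0,0,0] := by
  show E4 0 1 = _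
  ext i j
  fin_cases i <;> fin_cases j <;>
    simp (config := { decide := true }) [E4, Matrix.single, Matrix.vecHead, Matrix.vecTail]
lemma hT4 : TGen 4 = !![0,0,0,0; 0,0,1,0; 0,0,0,0; 0,0,0,0] := by
  show E4 1 2 = _
  ext i j
  fin_cases i <;> fin_cases j <;>
    simp (config := { decide := true }) [E4, Matrix.single, Matrix.vecHead, Matrix.vecTail]
lemma hT5 : TGen 5 = !![0,0,0,0; 0,0,0,0; 0,0,0,1; 0,0,0,0] := by
  show E4 2 3 = _
  ext i j
  fin_cases i <;> fin_cases j <;>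
    simp (config := { decide := true }) [E4, Matrix.single, Matrix.vecHead, Matrix.vecTail]
lemma hT6 : TGen 6 = !![0,0,1,0; 0,0,0,0; 0,0,0,0; 0,0,0,0] := by
  show E4 0 2 = _
  ext i j
  fin_cases i <;> fin_cases j <;>
    simp (config := { decide := true }) [E4, Matrix.single, Matrix.vecHead, Matrix.vecTail]
lemma hT7 : TGen 7 = !![0,0,0,0; 0,0,0,1; 0,0,0,0; 0,0,0,0] := by
  show E4 1 3 = _
  ext i j
  fin_cases i <;> fin_cases j <;>
    simp (config := { decide := true }) [E4, Matrix.single, Matrix.vecHead, Matrix.vecTail]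
lemma hT8 : TGen 8 = !![0,0,0,1; 0,0,0,0; 0,0,0,0; 0,0,0,0] := by
  show E4 0 3 = _
  ext i j
  fin_cases i <;> fin_cases j <;>
    simp (config := { decide := true }) [E4, Matrix.single, Matrix.vecHead, Matrix.vecTail]

/-- membership criterion -/
lemma mem_borel_of (M : Matrix (Fin 4) (Fin 4) ℝ)
    (h10 : M 1 0 = 0) (h20 : M 2 0 = 0) (h30 : M 3 0 = 0)
    (h21 : M 2 1 = 0) (h31 : M 3 1 = 0) (h32 : M 3 2 = 0)
    (htr : M 0 0 + M 1 1 + M 2 2 + M 3 3 = 0) : M ∈ borelSet := by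
  constructor
  · intro i j hij
    fin_cases i <;> fin_cases j <;> first
      | exact absurd hij (by decide)
      | assumption
  · simpa [Matrix.trace, Matrix.diag, Fin.sum_univ_four] using htr

lemma TGen_mem (k : Fin 9) : TGen k ∈ borelSet := by
  have m0 : TGen 0 ∈ borelSet := by
    apply mem_borel_of <;> simp only [hT0] <;>
      norm_num [Matrix.cons_val_zero, Matrix.cons_val_one, Matrix.head_cons, Matrix.cons_val_two,
        Matrix.cons_val_three, Matrix.vecHead, Matrix.vecTail]
  have m1 : TGen 1 ∈ borelSet := by
    apply mem_borel_of <;> simp only [hT1] <;>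
      norm_num [Matrix.cons_val_zero, Matrix.cons_val_one, Matrix.head_cons, Matrix.cons_val_two,
        Matrix.cons_val_three, Matrix.vecHead, Matrix.vecTail]
  have m2 : TGen 2 ∈ borelSet := by
    apply mem_borel_of <;> simp only [hT2] <;>
      norm_num [Matrix.cons_val_zero, Matrix.cons_val_one, Matrix.head_cons, Matrix.cons_val_two,
        Matrix.cons_val_three, Matrix.vecHead, Matrix.vecTail]
  have m3 : TGen 3 ∈ borelSet := by
    apply mem_borel_of <;> simp only [hT3] <;>
      norm_num [Matrix.cons_val_zero, Matrix.cons_val_one, Matrix.head_cons, Matrix.cons_val_two,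
        Matrix.cons_val_three, Matrix.vecHead, Matrix.vecTail]
  have m4 : TGen 4 ∈ borelSet := by
    apply mem_borel_of <;> simp only [hT4] <;>
      norm_num [Matrix.cons_val_zero, Matrix.cons_val_one, Matrix.head_cons, Matrix.cons_val_two,
        Matrix.cons_val_three, Matrix.vecHead, Matrix.vecTail]
  have m5 : TGen 5 ∈ borelSet := by
    apply mem_borel_of <;> simp only [hT5] <;>
      norm_num [Matrix.cons_val_zero, Matrix.cons_val_one, Matrix.head_cons, Matrix.cons_val_two,
        Matrix.cons_val_three, Matrix.vecHead, Matrix.vecTail]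
  have m6 : TGen 6 ∈ borelSet := by
    apply mem_borel_of <;> simp only [hT6] <;>
      norm_num [Matrix.cons_val_zero, Matrix.cons_val_one, Matrix.head_cons, Matrix.cons_val_two,
        Matrix.cons_val_three, Matrix.vecHead, Matrix.vecTail]
  have m7 : TGen 7 ∈ borelSet := by
    apply mem_borel_of <;> simp only [hT7] <;>
      norm_num [Matrix.cons_val_zero, Matrix.cons_val_one, Matrix.head_cons, Matrix.cons_val_two,
        Matrix.cons_val_three, Matrix.vecHead, Matrix.vecTail]
  have m8 : TGen 8 ∈ borelSet := by
    apply mem_borel_of <;> simp only [hT8] <;>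
      norm_num [Matrix.cons_val_zero, Matrix.cons_val_one, Matrix.head_cons, Matrix.cons_val_two,
        Matrix.cons_val_three, Matrix.vecHead, Matrix.vecTail]
  fin_cases k
  exacts [m0, m1, m2, m3, m4, m5, m6, m7, m8]

/-- Decomposition of a Borel matrix in the `TGen` basis. -/
lemma decomp {X : Matrix (Fin 4) (Fin 4) ℝ} (hX : X ∈ borelSet) :
    X = X 1 1 • TGen 0 + X 2 2 • TGen 1 + X 3 3 • TGen 2 + X 0 1 • TGen 3 +
        X 1 2 • TGen 4 + X 2 3 • TGen 5 + X 0 2 • TGen 6 + X 1 3 • TGen 7 +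
        X 0 3 • TGen 8 := by
  obtain ⟨ht, htr⟩ := hX
  have h00 : X 0 0 = -X 1 1 - X 2 2 - X 3 3 := by
    simp [Matrix.trace, Matrix.diag, Fin.sum_univ_four] at htr
    linarith
  have h10 : X 1 0 = 0 := ht (by decide)
  have h20 : X 2 0 = 0 := ht (by decide)
  have h30 : X 3 0 = 0 := ht (by decide)
  have h21 : X 2 1 = 0 := ht (by decide)
  have h31 : X 3 1 = 0 := ht (by decide)
  have h32 : X 3 2 = 0 := ht (by decide)
  rw [hT0, hT1, hT2, hT3, hT4, hT5, hT6, hT7, hT8]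
  ext i j
  fin_cases i <;> fin_cases j <;>
    simp [Matrix.cons_val_zero, Matrix.cons_val_one, Matrix.head_cons, Matrix.cons_val_two,
      Matrix.cons_val_three, Matrix.vecHead, Matrix.vecTail,
      h00, h10, h20, h30, h21, h31, h32] <;> ring

/-- coordinate map -/
def coordL : Matrix (Fin 4) (Fin 4) ℝ →ₗ[ℝ] (Fin 9 → ℝ) where
  toFun M := ![M 1 1, M 2 2, M 3 3, M 0 1, M 1 2, M 2 3, M 0 2, M 1 3, M 0 3]
  map_add' M N := by funext k; fin_cases k <;> rfl
  map_smul' c M := by funext k; fin_cases k <;> rfl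

lemma TGen_linearIndependent : LinearIndependent ℝ TGen := by
  apply LinearIndependent.of_comp coordL
  have hc : ∀ k : Fin 9, coordL (TGen k) = Pi.single k 1 := by
    have e0 : coordL (TGen 0) = Pi.single (0 : Fin 9) 1 := by
      funext i; fin_cases i <;>
        · show (-E4 0 0 + E4 1 1) _ _ = _
          simp (config := { decide := true }) [E4, Matrix.single, Pi.single_apply]
    have e1 : coordL (TGen 1) = Pi.single (1 : Fin 9) 1 := by
      funext i; fin_cases i <;>
        · show (-E4 0 0 + E4 2 2) _ _ = _
          simp (config := { decide := true }) [E4, Matrix.single, Pi.single_apply]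
    have e2 : coordL (TGen 2) = Pi.single (2 : Fin 9) 1 := by
      funext i; fin_cases i <;>
        · show (-E4 0 0 + E4 3 3) _ _ = _
          simp (config := { decide := true }) [E4, Matrix.single, Pi.single_apply]
    have e3 : coordL (TGen 3) = Pi.single (3 : Fin 9) 1 := by
      funext i; fin_cases i <;> rfl
    have e4 : coordL (TGen 4) = Pi.single (4 : Fin 9) 1 := by
      funext i; fin_cases i <;> rfl
    have e5 : coordL (TGen 5) = Pi.single (5 : Fin 9) 1 := by
      funext i; fin_cases i <;> rfl
    have e6 : coordL (TGen 6) = Pi.single (6 : Fin 9) 1 := by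
      funext i; fin_cases i <;> rfl
    have e7 : coordL (TGen 7) = Pi.single (7 : Fin 9) 1 := by
      funext i; fin_cases i <;> rfl
    have e8 : coordL (TGen 8) = Pi.single (8 : Fin 9) 1 := by
      funext i; fin_cases i <;> rfl
    intro k; fin_cases k
    exacts [e0, e1, e2, e3, e4, e5, e6, e7, e8]
  have h : (⇑coordL ∘ TGen) = fun i : Fin 9 => (Pi.basisFun ℝ (Fin 9)) i := by
    funext k; exact (hc k).trans (Pi.basisFun_apply ℝ (Fin 9) k).symm
  rw [h]
  exact (Pi.basisFun ℝ (Fin 9)).linearIndependent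

/-- Borel subalgebra as a submodule. -/
def borelSubmodule : Submodule ℝ (Matrix (Fin 4) (Fin 4) ℝ) where
  carrier := borelSet
  add_mem' := by
    rintro a b ⟨ha1, ha2⟩ ⟨hb1, hb2⟩
    exact ⟨ha1.add hb1, by simp [Matrix.trace_add, ha2, hb2]⟩
  zero_mem' := ⟨Matrix.blockTriangular_zero, by simp⟩
  smul_mem' := by
    rintro c a ⟨ha1, ha2⟩
    refine ⟨fun i j hij => ?_, by simp [Matrix.trace_smul, ha2]⟩
    simp [Matrix.smul_apply, ha1 hij]

lemma span_eq : (Submodule.span ℝ (Set.range TGen) : Set (Matrix (Fin 4) (Fin 4) ℝ)) = borelSet := by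
  apply Set.Subset.antisymm
  · have hle : Submodule.span ℝ (Set.range TGen) ≤ borelSubmodule := by
      rw [Submodule.span_le]
      rintro _ ⟨k, rfl⟩
      exact TGen_mem k
    exact fun x hx => hle hx
  · intro X hX
    have hmem : ∀ k : Fin 9, TGen k ∈ Submodule.span ℝ (Set.range TGen) :=
      fun k => Submodule.subset_span ⟨k, rfl⟩
    rw [SetLike.mem_coe, decomp hX]
    refine Submodule.add_mem _ (Submodule.add_mem _ (Submodule.add_mem _ (Submodule.add_mem _
      (Submodule.add_mem _ (Submodule.add_mem _ (Submodule.add_mem _ (Submodule.add_mem _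
      (Submodule.smul_mem _ _ (hmem 0)) (Submodule.smul_mem _ _ (hmem 1)))
      (Submodule.smul_mem _ _ (hmem 2))) (Submodule.smul_mem _ _ (hmem 3)))
      (Submodule.smul_mem _ _ (hmem 4))) (Submodule.smul_mem _ _ (hmem 5)))
      (Submodule.smul_mem _ _ (hmem 6))) (Submodule.smul_mem _ _ (hmem 7)))
      (Submodule.smul_mem _ _ (hmem 8))

lemma bracket_mem {X Y : Matrix (Fin 4) (Fin 4) ℝ} (hX : X ∈ borelSet) (hY : Y ∈ borelSet) :
    X * Y - Y * X ∈ borelSet := by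
  obtain ⟨hX1, _⟩ := hX
  obtain ⟨hY1, _⟩ := hY
  exact ⟨(hX1.mul hY1).sub (hY1.mul hX1), by
    simp [Matrix.trace_sub, Matrix.trace_mul_comm X Y]⟩

lemma hAlit (a b : ℝ) :
    (-2 : ℝ) • tGen 0 + a • tGen 1 + b • tGen 2 =
      !![-2, a*(1/Real.sqrt 2), b*(1/Real.sqrt 2), 0;
         0, 0, 0, -(a*(1/Real.sqrt 2));
         0, 0, 0, -(b*(1/Real.sqrt 2));
         0, 0, 0, 2] := by
  show (-2 : ℝ) • (E4 0 0 - E4 3 3) + a • ((1 / Real.sqrt 2) • (E4 0 1 - E4 1 3))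
      + b • ((1 / Real.sqrt 2) • (E4 0 2 - E4 2 3)) = _
  ext i j
  fin_cases i <;> fin_cases j <;>
    simp (config := { decide := true }) [E4, Matrix.single, Matrix.vecHead,
      Matrix.vecTail] <;> ring

lemma hClit (a b : ℝ) :
    a • tGen 1 + b • tGen 2 =
      !![0, a*(1/Real.sqrt 2), b*(1/Real.sqrt 2), 0;
         0, 0, 0, -(a*(1/Real.sqrt 2));
         0, 0, 0, -(b*(1/Real.sqrt 2));
         0, 0, 0, 0] := by
  show a • ((1 / Real.sqrt 2) • (E4 0 1 - E4 1 3))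
      + b • ((1 / Real.sqrt 2) • (E4 0 2 - E4 2 3)) = _
  ext i j
  fin_cases i <;> fin_cases j <;>
    simp (config := { decide := true }) [E4, Matrix.single, Matrix.vecHead,
      Matrix.vecTail] <;> ring

lemma hACkey (p q r t : ℝ) :
    (!![-2, p, q, 0; 0, 0, 0, -p; 0, 0, 0, -q; 0, 0, 0, 2] : Matrix (Fin 4) (Fin 4) ℝ) *
        !![0, r, t, 0; 0, 0, 0, -r; 0, 0, 0, -t; 0, 0, 0, 0] -
      !![0, r, t, 0; 0, 0, 0, -r; 0, 0, 0, -t; 0, 0, 0, 0] *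
        !![-2, p, q, 0; 0, 0, 0, -p; 0, 0, 0, -q; 0, 0, 0, 2] =
    (-2 : ℝ) • !![0, r, t, 0; 0, 0, 0, -r; 0, 0, 0, -t; 0, 0, 0, 0] := by
  ext i j
  fin_cases i <;> fin_cases j <;>
    simp [Matrix.mul_apply, Fin.sum_univ_four, Matrix.vecHead, Matrix.vecTail] <;> ring

theorem class_switching_restriction_homomorphism :
    LinearIndependent ℝ TGen ∧
    (Submodule.span ℝ (Set.range TGen) : Set (Matrix (Fin 4) (Fin 4) ℝ)) = borelSet ∧
    (∀ X ∈ borelSet, ∀ Y ∈ borelSet, X * Y - Y * X ∈ borelSet) ∧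
    (∀ α₁ α₂ α₃ α₄ : ℝ,
      ∀ φ : Matrix (Fin 4) (Fin 4) ℝ →ₗ[ℝ] Matrix (Fin 4) (Fin 4) ℝ,
      φ (TGen 0) = (-2 : ℝ) • tGen 0 + α₁ • tGen 1 + α₃ • tGen 2 →
      φ (TGen 1) = -(tGen 0) + (α₁/2) • tGen 1 + (α₃/2) • tGen 2 →
      φ (TGen 2) = -(tGen 0) + (α₁/2) • tGen 1 + (α₃/2) • tGen 2 →
      φ (TGen 3) = α₂ • tGen 1 + α₄ • tGen 2 →
      φ (TGen 4) = 0 → φ (TGen 5) = 0 → φ (TGen 6) = 0 →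
      φ (TGen 7) = 0 → φ (TGen 8) = 0 →
      ∀ X ∈ borelSet, ∀ Y ∈ borelSet,
        φ (X * Y - Y * X) = φ X * φ Y - φ Y * φ X) := by
  refine ⟨TGen_linearIndependent, span_eq, fun X hX Y hY => bracket_mem hX hY, ?_⟩
  intro α₁ α₂ α₃ α₄ φ h0 h1 h2 h3 h4 h5 h6 h7 h8 X hX Y hY
  -- φ(T₂) = φ(T₃) = ½ φ(T₁)
  have hB1 : φ (TGen 1) = (2⁻¹ : ℝ) • φ (TGen 0) := by rw [h1, h0]; module
  have hB2 : φ (TGen 2) = (2⁻¹ : ℝ) • φ (TGen 0) := by rw [h2, h0]; module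
  -- the key formula for φ on the Borel subalgebra
  have key : ∀ W, W ∈ borelSet →
      φ W = (W 1 1 + W 2 2 / 2 + W 3 3 / 2) • φ (TGen 0) + W 0 1 • φ (TGen 3) := by
    intro W hW
    conv_lhs => rw [decomp hW]
    simp only [map_add, _root_.map_smul, hB1, hB2, h4, h5, h6, h7, h8, smul_zero, add_zero, smul_smul]
    module
  -- the commutator identity for the images
  have hAC : φ (TGen 0) * φ (TGen 3) - φ (TGen 3) * φ (TGen 0) = (-2 : ℝ) • φ (TGen 3) := by
    rw [h0, h3, hAlit, hClit]
    exact hACkey _ _ _ _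
  have hACmul : φ (TGen 0) * φ (TGen 3) =
      (-2 : ℝ) • φ (TGen 3) + φ (TGen 3) * φ (TGen 0) := by
    rw [← hAC]; abel
  -- entry facts
  obtain ⟨hXt, hXtr⟩ := hX
  obtain ⟨hYt, hYtr⟩ := hY
  have hX10 : X 1 0 = 0 := hXt (by decide)
  have hX20 : X 2 0 = 0 := hXt (by decide)
  have hX30 : X 3 0 = 0 := hXt (by decide)
  have hX21 : X 2 1 = 0 := hXt (by decide)
  have hX31 : X 3 1 = 0 := hXt (by decide)
  have hX32 : X 3 2 = 0 := hXt (by decide)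
  have hY10 : Y 1 0 = 0 := hYt (by decide)
  have hY20 : Y 2 0 = 0 := hYt (by decide)
  have hY30 : Y 3 0 = 0 := hYt (by decide)
  have hY21 : Y 2 1 = 0 := hYt (by decide)
  have hY31 : Y 3 1 = 0 := hYt (by decide)
  have hY32 : Y 3 2 = 0 := hYt (by decide)
  have hX00 : X 0 0 = -X 1 1 - X 2 2 - X 3 3 := by
    simp [Matrix.trace, Matrix.diag, Fin.sum_univ_four] at hXtr; linarith
  have hY00 : Y 0 0 = -Y 1 1 - Y 2 2 - Y 3 3 := by
    simp [Matrix.trace, Matrix.diag, Fin.sum_univ_four] at hYtr; linarith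
  have e11 : (X * Y - Y * X) 1 1 = 0 := by
    simp [Matrix.sub_apply, Matrix.mul_apply, Fin.sum_univ_four,
      hX10, hX21, hX31, hY10, hY21, hY31]
    ring
  have e22 : (X * Y - Y * X) 2 2 = 0 := by
    simp [Matrix.sub_apply, Matrix.mul_apply, Fin.sum_univ_four,
      hX20, hX21, hX32, hY20, hY21, hY32]
    ring
  have e33 : (X * Y - Y * X) 3 3 = 0 := by
    simp [Matrix.sub_apply, Matrix.mul_apply, Fin.sum_univ_four,
      hX30, hX31, hX32, hY30, hY31, hY32]
    ring
  have e01 : (X * Y - Y * X) 0 1 =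
      X 0 0 * Y 0 1 + X 0 1 * Y 1 1 - (Y 0 0 * X 0 1 + Y 0 1 * X 1 1) := by
    simp [Matrix.sub_apply, Matrix.mul_apply, Fin.sum_univ_four,
      hX21, hX31, hY21, hY31]
  rw [key _ (bracket_mem ⟨hXt, hXtr⟩ ⟨hYt, hYtr⟩), key X ⟨hXt, hXtr⟩, key Y ⟨hYt, hYtr⟩,
    e11, e22, e33, e01, hX00, hY00]
  simp only [add_mul, mul_add, smul_mul_assoc, mul_smul_comm, smul_smul, smul_add, sub_mul,
    mul_sub]
  rw [hACmul]
  match_scalars <;> ring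
end
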